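/- There exists a universal constant c > 0 such that for every d ≥ 2, B > 0, and unit vectors ℓ, u ∈ ℝ^d, if Y is distributed according to σ_B conditioned on the hemisphere S₁ = {y ∈ S^{d−1}(B) : ⟨y,u⟩ > 0}, then for all t ≥ 0, P( |⟨ℓ,Y⟩ − E⟨ℓ,Y⟩| ≥ t ) ≤ 4 exp(−c d t² / B²). -/

import Mathlib

open MeasureTheory ProbabilityTheory Real Metric
open scoped ENNReal RealInnerProductSpace

/-- The uniform (rotation-invariant) probability measure on the sphere of radius `B` in
`ℝ^d`, realized as the pushforward of normalized Lebesgue measure on the unit ball under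
the radial projection `y ↦ (B/‖y‖) y`. -/
noncomputable def sphereUniform (d : ℕ) (B : ℝ) : Measure (EuclideanSpace ℝ (Fin d)) :=
  Measure.map (fun y => (B / ‖y‖) • y)
    ((volume (Metric.ball (0 : EuclideanSpace ℝ (Fin d)) 1))⁻¹ •
      volume.restrict (Metric.ball (0 : EuclideanSpace ℝ (Fin d)) 1))

variable {d : ℕ} {B : ℝ}

lemma measurable_radial (B : ℝ) : Measurable (fun y : EuclideanSpace ℝ (Fin d) => (B / ‖y‖) • y) :=
  (measurable_const.div measurable_norm).smul measurable_id

lemma sphereUniform_apply {A : Set (EuclideanSpace ℝ (Fin d))} (hA : MeasurableSet A) :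
    sphereUniform d B A =
      (volume (ball (0 : EuclideanSpace ℝ (Fin d)) 1))⁻¹ *
        volume (ball (0 : EuclideanSpace ℝ (Fin d)) 1 ∩
          (fun y => (B / ‖y‖) • y) ⁻¹' A) := by
  rw [sphereUniform, Measure.map_apply (measurable_radial B) hA, Measure.smul_apply,
    Measure.restrict_apply' measurableSet_ball, smul_eq_mul, Set.inter_comm]

lemma nontrivial_of_pos (hd : 0 < d) : Nontrivial (EuclideanSpace ℝ (Fin d)) :=
  Module.nontrivial_of_finrank_pos (by simpa using hd :
    0 < Module.finrank ℝ (EuclideanSpace ℝ (Fin d)))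

lemma volume_ball_pos' (hd : 0 < d) :
    volume (ball (0 : EuclideanSpace ℝ (Fin d)) 1) ≠ 0 := by
  haveI := nontrivial_of_pos hd
  exact (measure_ball_pos volume _ one_pos).ne'

lemma volume_ball_ne_top :
    volume (ball (0 : EuclideanSpace ℝ (Fin d)) 1) ≠ ∞ :=
  measure_ball_lt_top.ne

set_option maxHeartbeats 1000000 in
lemma sphereUniform_tail (hd : 0 < d) (hB : 0 < B) {l : EuclideanSpace ℝ (Fin d)}
    (hl : ‖l‖ = 1) {s : ℝ} (hs : 0 < s) :
    sphereUniform d B {y | s * B ≤ ⟪l, y⟫} ≤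
      ENNReal.ofReal (Real.exp (-((d : ℝ) * s ^ 2 / 4))) := by
  haveI := nontrivial_of_pos hd
  have hcont : Continuous fun y : EuclideanSpace ℝ (Fin d) => ⟪l, y⟫ :=
    continuous_const.inner continuous_id
  have hA : MeasurableSet {y : EuclideanSpace ℝ (Fin d) | s * B ≤ ⟪l, y⟫} :=
    measurableSet_le measurable_const hcont.measurable
  rw [sphereUniform_apply hA]
  set P := ball (0 : EuclideanSpace ℝ (Fin d)) 1 ∩
      (fun y => (B / ‖y‖) • y) ⁻¹' {y | s * B ≤ ⟪l, y⟫} with hPdef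
  have hPmem : ∀ y ∈ P, y ≠ 0 ∧ s * ‖y‖ ≤ ⟪l, y⟫ ∧ ‖y‖ < 1 := by
    intro y hy
    rcases hy with ⟨hy1, hy2⟩
    simp only [Set.mem_preimage, Set.mem_setOf_eq, real_inner_smul_right] at hy2
    have hy0 : y ≠ 0 := by
      rintro rfl
      simp only [norm_zero, inner_zero_right, mul_zero] at hy2
      nlinarith
    have hny : 0 < ‖y‖ := norm_pos_iff.2 hy0
    refine ⟨hy0, ?_, by simpa [mem_ball, dist_eq_norm] using hy1⟩
    have := hy2
    rw [div_mul_eq_mul_div, le_div_iff₀ hny] at this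
    nlinarith
  by_cases hs1 : 1 < s
  · have hPempty : P = ∅ := by
      ext y
      simp only [Set.mem_empty_iff_false, iff_false]
      intro hy
      obtain ⟨hy0, hy2, hy3⟩ := hPmem y hy
      have hny : 0 < ‖y‖ := norm_pos_iff.2 hy0
      have hcs : ⟪l, y⟫ ≤ ‖y‖ := by
        have := real_inner_le_norm l y
        rwa [hl, one_mul] at this
      nlinarith
    rw [hPempty]
    simp
  push_neg at hs1
  set s₀ : ℝ := min s (Real.sqrt 2)⁻¹ with hs₀def
  have hsqrt2 : (0:ℝ) < Real.sqrt 2 := Real.sqrt_pos.2 (by norm_num)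
  have hs₀pos : 0 < s₀ := lt_min hs (by positivity)
  have hs₀le : s₀ ≤ s := min_le_left _ _
  have hinv2 : ((Real.sqrt 2)⁻¹ : ℝ) ^ 2 = 1 / 2 := by
    rw [inv_pow, Real.sq_sqrt (by norm_num : (2:ℝ) ≥ 0)]
    norm_num
  have hs₀sq : s₀ ^ 2 ≤ 1 / 2 := by
    have : s₀ ≤ (Real.sqrt 2)⁻¹ := min_le_right _ _
    nlinarith
  have hs2 : s ^ 2 ≤ 2 * s₀ ^ 2 := by
    rcases le_total s (Real.sqrt 2)⁻¹ with h | h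
    · have : s₀ = s := min_eq_left h
      nlinarith
    · have : s₀ = (Real.sqrt 2)⁻¹ := min_eq_right h
      rw [this, hinv2]
      nlinarith
  set R : ℝ := Real.sqrt (1 - s₀ ^ 2) with hRdef
  have hRnn : 0 ≤ R := Real.sqrt_nonneg _
  have hsub : P ⊆ closedBall (s₀ • l) R := by
    intro y hy
    obtain ⟨hy0, hy2, hy3⟩ := hPmem y hy
    have hny : 0 ≤ ‖y‖ := norm_nonneg y
    rw [mem_closedBall, dist_eq_norm]
    have hnsq : ‖y - s₀ • l‖ ^ 2 ≤ 1 - s₀ ^ 2 := by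
      rw [norm_sub_sq_real, real_inner_smul_right, real_inner_comm]
      rw [norm_smul, Real.norm_eq_abs, abs_of_pos hs₀pos, hl, mul_one]
      have h1 : s₀ * (s * ‖y‖) ≤ s₀ * ⟪l, y⟫ := by
        exact mul_le_mul_of_nonneg_left hy2 hs₀pos.le
      have h2 : s₀ ^ 2 * ‖y‖ ≤ s₀ * (s * ‖y‖) := by
        nlinarith [mul_le_mul_of_nonneg_right (mul_le_mul_of_nonneg_left hs₀le hs₀pos.le) hny]
      nlinarith [sq_nonneg (1 - ‖y‖)]
    have : ‖y - s₀ • l‖ ^ 2 ≤ R ^ 2 := by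
      rw [hRdef, Real.sq_sqrt (by nlinarith : (0:ℝ) ≤ 1 - s₀ ^ 2)]
      exact hnsq
    nlinarith [norm_nonneg (y - s₀ • l)]
  have hvol : volume P ≤ ENNReal.ofReal (R ^ d) *
      volume (ball (0 : EuclideanSpace ℝ (Fin d)) 1) := by
    calc volume P ≤ volume (closedBall (s₀ • l) R) := measure_mono hsub
      _ = ENNReal.ofReal (R ^ Module.finrank ℝ (EuclideanSpace ℝ (Fin d))) *
            volume (ball (0 : EuclideanSpace ℝ (Fin d)) 1) :=
          Measure.addHaar_closedBall volume _ hRnn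
      _ = _ := by rw [finrank_euclideanSpace_fin]
  calc (volume (ball (0 : EuclideanSpace ℝ (Fin d)) 1))⁻¹ * volume P
      ≤ (volume (ball (0 : EuclideanSpace ℝ (Fin d)) 1))⁻¹ *
        (ENNReal.ofReal (R ^ d) * volume (ball (0 : EuclideanSpace ℝ (Fin d)) 1)) :=
        mul_le_mul_right hvol _
    _ = ENNReal.ofReal (R ^ d) := by
        rw [mul_comm (ENNReal.ofReal (R ^ d)), ← mul_assoc,
          ENNReal.inv_mul_cancel (volume_ball_pos' hd) volume_ball_ne_top, one_mul]
    _ ≤ ENNReal.ofReal (Real.exp (-((d : ℝ) * s ^ 2 / 4))) := by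
        apply ENNReal.ofReal_le_ofReal
        have hRle : R ≤ Real.exp (-(s₀ ^ 2) / 2) := by
          have h1 : 1 - s₀ ^ 2 ≤ Real.exp (-(s₀ ^ 2)) := by
            have := Real.add_one_le_exp (-(s₀ ^ 2))
            linarith
          calc R ≤ Real.sqrt (Real.exp (-(s₀ ^ 2))) := Real.sqrt_le_sqrt h1
            _ = Real.exp (-(s₀ ^ 2) / 2) := by
                rw [show Real.exp (-(s₀ ^ 2)) =
                    Real.exp (-(s₀ ^ 2) / 2) * Real.exp (-(s₀ ^ 2) / 2) by
                  rw [← Real.exp_add]; ring_nf,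
                  Real.sqrt_mul_self (Real.exp_nonneg _)]
        calc R ^ d ≤ (Real.exp (-(s₀ ^ 2) / 2)) ^ d := pow_le_pow_left₀ hRnn hRle d
          _ = Real.exp ((d : ℝ) * (-(s₀ ^ 2) / 2)) := by
              rw [← Real.exp_nat_mul]
          _ ≤ Real.exp (-((d : ℝ) * s ^ 2 / 4)) := by
              apply Real.exp_le_exp.2
              have hd0 : (0:ℝ) ≤ d := Nat.cast_nonneg d
              nlinarith

lemma sphereUniform_isProb (hd : 0 < d) (B : ℝ) :
    IsProbabilityMeasure (sphereUniform d B) := by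
  constructor
  rw [sphereUniform_apply MeasurableSet.univ]
  simp only [Set.preimage_univ, Set.inter_univ]
  exact ENNReal.inv_mul_cancel (volume_ball_pos' hd) volume_ball_ne_top




lemma sphereUniform_map_isometry (e : EuclideanSpace ℝ (Fin d) ≃ₗᵢ[ℝ] EuclideanSpace ℝ (Fin d)) :
    Measure.map e (sphereUniform d B) = sphereUniform d B := by
  have h : e ⁻¹' (ball 0 1) = ball (0 : EuclideanSpace ℝ (Fin d)) 1 := by
    ext y; simp [mem_ball, dist_eq_norm, e.norm_map]
  have hres : Measure.map e (volume.restrict (e ⁻¹' ball (0 : EuclideanSpace ℝ (Fin d)) 1)) =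
      volume.restrict (ball (0 : EuclideanSpace ℝ (Fin d)) 1) :=
    (e.measurePreserving.restrict_preimage measurableSet_ball).map_eq
  rw [h] at hres
  have hcomm : (e : EuclideanSpace ℝ (Fin d) → EuclideanSpace ℝ (Fin d)) ∘
      (fun y => (B / ‖y‖) • y) = (fun y => (B / ‖y‖) • y) ∘ e := by
    funext y
    simp [Function.comp, e.norm_map]
  rw [sphereUniform,
    Measure.map_map e.continuous.measurable (measurable_radial B), hcomm,
    ← Measure.map_map (measurable_radial B) e.continuous.measurable,
    Measure.map_smul, hres]


lemma sphereUniform_ae_norm (hd : 0 < d) (hB : 0 < B) :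
    ∀ᵐ z ∂(sphereUniform d B), ‖z‖ = B := by
  haveI := nontrivial_of_pos hd
  rw [ae_iff]
  have hA : MeasurableSet {z : EuclideanSpace ℝ (Fin d) | ¬ ‖z‖ = B} :=
    ((measurable_norm (measurableSet_singleton B)).compl)
  rw [sphereUniform_apply hA]
  have : ball (0 : EuclideanSpace ℝ (Fin d)) 1 ∩
      (fun y => (B / ‖y‖) • y) ⁻¹' {z | ¬ ‖z‖ = B} ⊆ {0} := by
    intro y hy
    rcases hy with ⟨-, hy2⟩
    simp only [Set.mem_preimage, Set.mem_setOf_eq] at hy2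
    by_contra hy0
    apply hy2
    have hny : ‖y‖ ≠ 0 := by simpa [norm_eq_zero] using hy0
    rw [norm_smul]
    rw [Real.norm_eq_abs, abs_div, abs_of_pos hB, abs_of_nonneg (norm_nonneg y)]
    field_simp
  have h0 : volume (ball (0 : EuclideanSpace ℝ (Fin d)) 1 ∩
      (fun y => (B / ‖y‖) • y) ⁻¹' {z | ¬ ‖z‖ = B}) = 0 :=
    measure_mono_null this (measure_singleton 0)
  rw [h0, mul_zero]

lemma measurable_hemi (u : EuclideanSpace ℝ (Fin d)) :
    MeasurableSet {y : EuclideanSpace ℝ (Fin d) | 0 < ⟪y, u⟫} :=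
  measurableSet_lt measurable_const (continuous_id.inner continuous_const).measurable

lemma sphereUniform_inner_zero (hB : 0 < B) {u : EuclideanSpace ℝ (Fin d)} (hu : ‖u‖ = 1) :
    sphereUniform d B {y | ⟪y, u⟫ = (0:ℝ)} = 0 := by
  have hA : MeasurableSet {y : EuclideanSpace ℝ (Fin d) | ⟪y, u⟫ = (0:ℝ)} :=
    measurableSet_eq_fun (continuous_id.inner continuous_const).measurable measurable_const
  rw [sphereUniform_apply hA]
  have hsub : ball (0 : EuclideanSpace ℝ (Fin d)) 1 ∩
      (fun y => (B / ‖y‖) • y) ⁻¹' {y | ⟪y, u⟫ = (0:ℝ)} ⊆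
      ((ℝ ∙ u)ᗮ : Submodule ℝ (EuclideanSpace ℝ (Fin d))) := by
    rintro y ⟨-, hy⟩
    simp only [Set.mem_preimage, Set.mem_setOf_eq, real_inner_smul_left] at hy
    rw [SetLike.mem_coe, Submodule.mem_orthogonal_singleton_iff_inner_left]
    by_cases hy0 : y = 0
    · simp [hy0]
    · have : B / ‖y‖ ≠ 0 := by
        have : ‖y‖ ≠ 0 := norm_ne_zero_iff.2 hy0
        positivity
      exact (mul_eq_zero.1 hy).resolve_left this
  have hK : ((ℝ ∙ u)ᗮ : Submodule ℝ (EuclideanSpace ℝ (Fin d))) ≠ ⊤ := by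
    intro h
    have hu0 : u ∈ ((ℝ ∙ u)ᗮ : Submodule ℝ (EuclideanSpace ℝ (Fin d))) := h ▸ Submodule.mem_top
    rw [Submodule.mem_orthogonal_singleton_iff_inner_left, real_inner_self_eq_norm_sq, hu] at hu0
    norm_num at hu0
  have := Measure.addHaar_submodule (volume : Measure (EuclideanSpace ℝ (Fin d))) _ hK
  rw [measure_mono_null hsub this, mul_zero]

lemma sphereUniform_hemi (hd : 0 < d) (hB : 0 < B) {u : EuclideanSpace ℝ (Fin d)}
    (hu : ‖u‖ = 1) : sphereUniform d B {y | 0 < ⟪y, u⟫} = 1/2 := by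
  haveI := sphereUniform_isProb hd B
  set μ := sphereUniform d B
  have hneg : μ {y | ⟪y, u⟫ < 0} = μ {y | 0 < ⟪y, u⟫} := by
    let e : EuclideanSpace ℝ (Fin d) ≃ₗᵢ[ℝ] EuclideanSpace ℝ (Fin d) :=
      LinearIsometryEquiv.neg ℝ
    have h1 : Measure.map e μ = μ := sphereUniform_map_isometry _
    have h2 : μ (e ⁻¹' {y | 0 < ⟪y, u⟫}) = μ {y | 0 < ⟪y, u⟫} := by
      conv_rhs => rw [← h1]
      rw [Measure.map_apply e.continuous.measurable (measurable_hemi u)]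
    have h3 : e ⁻¹' {y | 0 < ⟪y, u⟫} = {y | ⟪y, u⟫ < 0} := by
      ext y
      simp only [Set.mem_preimage, Set.mem_setOf_eq]
      show 0 < ⟪-y, u⟫ ↔ _
      rw [inner_neg_left]
      constructor <;> intro h <;> linarith
    rw [← h3, h2]
  have hsplit : μ {y | 0 < ⟪y, u⟫} + μ {y | ⟪y, u⟫ < 0} = 1 := by
    have hc : {y : EuclideanSpace ℝ (Fin d) | ⟪y, u⟫ < 0} ∪ {y | ⟪y, u⟫ = (0:ℝ)} =
        {y | 0 < ⟪y, u⟫}ᶜ := by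
      ext y
      simp only [Set.mem_union, Set.mem_setOf_eq, Set.mem_compl_iff, not_lt]
      constructor
      · rintro (h | h)
        · exact le_of_lt h
        · exact le_of_eq h
      · intro h
        exact lt_or_eq_of_le h
    have : μ ({y | 0 < ⟪y, u⟫}ᶜ) = μ {y | ⟪y, u⟫ < 0} := by
      rw [← hc]
      refine le_antisymm ?_ (measure_mono Set.subset_union_left)
      calc μ ({y | ⟪y, u⟫ < 0} ∪ {y | ⟪y, u⟫ = (0:ℝ)}) ≤
          μ {y | ⟪y, u⟫ < 0} + μ {y | ⟪y, u⟫ = (0:ℝ)} := measure_union_le _ _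
        _ = μ {y | ⟪y, u⟫ < 0} := by rw [sphereUniform_inner_zero hB hu, add_zero]
    rw [← this, measure_add_measure_compl (measurable_hemi u), measure_univ]
  rw [hneg] at hsplit
  have h2 : 2 * μ {y | 0 < ⟪y, u⟫} = 1 := by rw [two_mul]; exact hsplit
  have := congrArg (fun x => 2⁻¹ * x) h2
  simp only [← mul_assoc, ENNReal.inv_mul_cancel (by norm_num : (2:ℝ≥0∞) ≠ 0)
    (by norm_num : (2:ℝ≥0∞) ≠ ∞), one_mul, mul_one] at this
  rw [this]
  rw [one_div]

lemma cond_le (hd : 0 < d) (hB : 0 < B) {u : EuclideanSpace ℝ (Fin d)} (hu : ‖u‖ = 1)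
    (A : Set (EuclideanSpace ℝ (Fin d))) :
    (sphereUniform d B)[|{y | 0 < ⟪y, u⟫}] A ≤ 2 * sphereUniform d B A := by
  rw [cond_apply (measurable_hemi u)]
  rw [sphereUniform_hemi hd hB hu]
  have : ((1:ℝ≥0∞)/2)⁻¹ = 2 := by
    rw [one_div, inv_inv]
  rw [this]
  exact mul_le_mul_right (measure_mono Set.inter_subset_right) 2

lemma integrable_inner_sq (hd : 0 < d) (hB : 0 < B) (w : EuclideanSpace ℝ (Fin d)) :
    Integrable (fun z : EuclideanSpace ℝ (Fin d) => ⟪w, z⟫ ^ 2) (sphereUniform d B) := by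
  haveI := sphereUniform_isProb hd B
  refine ⟨((continuous_const.inner continuous_id).pow 2).aestronglyMeasurable, ?_⟩
  apply HasFiniteIntegral.of_bounded (C := (‖w‖ * B) ^ 2)
  filter_upwards [sphereUniform_ae_norm hd hB] with z hz
  rw [Real.norm_eq_abs, abs_pow]
  have h : |⟪w, z⟫| ≤ ‖w‖ * B := by
    calc |⟪w, z⟫| ≤ ‖w‖ * ‖z‖ := abs_real_inner_le_norm w z
      _ = ‖w‖ * B := by rw [hz]
  exact pow_le_pow_left₀ (abs_nonneg _) h 2

lemma inner_sq_moment_eq (hd : 0 < d) (hB : 0 < B) {a b : EuclideanSpace ℝ (Fin d)}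
    (ha : ‖a‖ = 1) (hb : ‖b‖ = 1) :
    ∫ z, ⟪a, z⟫ ^ 2 ∂(sphereUniform d B) = ∫ z, ⟪b, z⟫ ^ 2 ∂(sphereUniform d B) := by
  by_cases hab : a = b
  · rw [hab]
  · set e : EuclideanSpace ℝ (Fin d) ≃ₗᵢ[ℝ] EuclideanSpace ℝ (Fin d) :=
      Submodule.reflection (ℝ ∙ (a - b))ᗮ with he
    have hea : e a = b := Submodule.reflection_sub (by rw [ha, hb])
    have h1 : ∫ z, ⟪b, z⟫ ^ 2 ∂(sphereUniform d B)
        = ∫ z, ⟪b, e z⟫ ^ 2 ∂(sphereUniform d B) := by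
      conv_lhs => rw [← sphereUniform_map_isometry e]
      rw [integral_map e.continuous.measurable.aemeasurable
        ((continuous_const.inner continuous_id).pow 2).aestronglyMeasurable]
    rw [h1]
    congr 1
    funext z
    rw [← hea, e.inner_map_map]

lemma inner_sq_moment (hd : 0 < d) (hB : 0 < B) {l : EuclideanSpace ℝ (Fin d)} (hl : ‖l‖ = 1) :
    ∫ z, ⟪l, z⟫ ^ 2 ∂(sphereUniform d B) = B ^ 2 / d := by
  haveI := sphereUniform_isProb hd B
  set μ := sphereUniform d B
  set b : OrthonormalBasis (Fin d) ℝ (EuclideanSpace ℝ (Fin d)) :=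
    EuclideanSpace.basisFun (Fin d) ℝ with hbdef
  have hnorm : ∀ i, ‖b i‖ = 1 := fun i => b.orthonormal.1 i
  have hsum : ∑ i : Fin d, ∫ z, ⟪b i, z⟫ ^ 2 ∂μ = B ^ 2 := by
    rw [← integral_finset_sum _ (fun i _ => integrable_inner_sq hd hB (b i))]
    have : ∀ᵐ z ∂μ, ∑ i : Fin d, ⟪b i, z⟫ ^ 2 = B ^ 2 := by
      filter_upwards [sphereUniform_ae_norm hd hB] with z hz
      have : ∑ i : Fin d, ⟪b i, z⟫ ^ 2 = ‖z‖ ^ 2 := by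
        have h := b.sum_inner_mul_inner z z
        calc ∑ i : Fin d, ⟪b i, z⟫ ^ 2 = ∑ i : Fin d, ⟪z, b i⟫ * ⟪b i, z⟫ := by
              refine Finset.sum_congr rfl fun i _ => ?_
              rw [sq, real_inner_comm z (b i)]
          _ = ⟪z, z⟫ := h
          _ = ‖z‖ ^ 2 := real_inner_self_eq_norm_sq z
      rw [this, hz]
    rw [integral_congr_ae this, integral_const]
    simp
  have hall : ∀ i : Fin d, ∫ z, ⟪b i, z⟫ ^ 2 ∂μ = ∫ z, ⟪l, z⟫ ^ 2 ∂μ := fun i =>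
    inner_sq_moment_eq hd hB (hnorm i) hl
  rw [Finset.sum_congr rfl (fun i _ => hall i), Finset.sum_const, Finset.card_univ,
    Fintype.card_fin, nsmul_eq_mul] at hsum
  have hd' : (d : ℝ) ≠ 0 := Nat.cast_ne_zero.2 hd.ne'
  field_simp at hsum ⊢
  linarith

lemma sphereUniform_twoTail (hd : 0 < d) (hB : 0 < B) {l : EuclideanSpace ℝ (Fin d)}
    (hl : ‖l‖ = 1) {t : ℝ} (ht : 0 < t) :
    sphereUniform d B {y | t ≤ |⟪l, y⟫|} ≤
      ENNReal.ofReal (2 * Real.exp (-((d : ℝ) * t ^ 2 / (4 * B ^ 2)))) := by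
  set s : ℝ := t / B with hsdef
  have hs : 0 < s := div_pos ht hB
  have hsB : s * B = t := div_mul_cancel₀ t hB.ne'
  have hsub : {y : EuclideanSpace ℝ (Fin d) | t ≤ |⟪l, y⟫|} ⊆
      {y | s * B ≤ ⟪l, y⟫} ∪ {y | s * B ≤ ⟪-l, y⟫} := by
    intro y hy
    simp only [Set.mem_setOf_eq] at hy
    rcases abs_cases (⟪l, y⟫ : ℝ) with ⟨h, -⟩ | ⟨h, -⟩
    · left; simp only [Set.mem_setOf_eq, hsB]; linarith
    · right; simp only [Set.mem_setOf_eq, hsB, inner_neg_left]; linarith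
  have hexp : -((d : ℝ) * s ^ 2 / 4) = -((d : ℝ) * t ^ 2 / (4 * B ^ 2)) := by
    rw [hsdef]
    field_simp
  calc sphereUniform d B {y | t ≤ |⟪l, y⟫|}
      ≤ sphereUniform d B ({y | s * B ≤ ⟪l, y⟫} ∪ {y | s * B ≤ ⟪-l, y⟫}) :=
        measure_mono hsub
    _ ≤ sphereUniform d B {y | s * B ≤ ⟪l, y⟫} + sphereUniform d B {y | s * B ≤ ⟪-l, y⟫} :=
        measure_union_le _ _
    _ ≤ ENNReal.ofReal (Real.exp (-((d : ℝ) * s ^ 2 / 4)))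
        + ENNReal.ofReal (Real.exp (-((d : ℝ) * s ^ 2 / 4))) :=
        add_le_add (sphereUniform_tail hd hB hl hs)
          (sphereUniform_tail hd hB (by rw [norm_neg, hl]) hs)
    _ = ENNReal.ofReal (2 * Real.exp (-((d : ℝ) * s ^ 2 / 4))) := by
        rw [← ENNReal.ofReal_add (Real.exp_nonneg _) (Real.exp_nonneg _), two_mul]
    _ = _ := by rw [hexp]

lemma cond_ae_norm (hd : 0 < d) (hB : 0 < B) {u : EuclideanSpace ℝ (Fin d)} (hu : ‖u‖ = 1) :
    ∀ᵐ z ∂((sphereUniform d B)[|{y | 0 < ⟪y, u⟫}]), ‖z‖ = B := by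
  rw [ae_iff]
  have h0 : sphereUniform d B {z : EuclideanSpace ℝ (Fin d) | ¬ ‖z‖ = B} = 0 := by
    have := sphereUniform_ae_norm (d := d) hd hB
    rwa [ae_iff] at this
  refine le_antisymm ?_ zero_le
  calc (sphereUniform d B)[|{y | 0 < ⟪y, u⟫}] {z | ¬ ‖z‖ = B}
      ≤ 2 * sphereUniform d B {z | ¬ ‖z‖ = B} := cond_le hd hB hu _
    _ = 0 := by rw [h0, mul_zero]

lemma cond_isProb (hd : 0 < d) (hB : 0 < B) {u : EuclideanSpace ℝ (Fin d)} (hu : ‖u‖ = 1) :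
    IsProbabilityMeasure ((sphereUniform d B)[|{y | 0 < ⟪y, u⟫}]) := by
  haveI := sphereUniform_isProb hd B
  exact cond_isProbabilityMeasure (by rw [sphereUniform_hemi hd hB hu]; norm_num)

lemma cond_le_smul (hd : 0 < d) (hB : 0 < B) {u : EuclideanSpace ℝ (Fin d)} (hu : ‖u‖ = 1) :
    (sphereUniform d B)[|{y | 0 < ⟪y, u⟫}] ≤ (2 : ℝ≥0∞) • sphereUniform d B :=
  Measure.le_intro fun s _ _ => by
    rw [Measure.smul_apply, smul_eq_mul]
    exact cond_le hd hB hu s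

lemma integrable_inner_sq_cond (hd : 0 < d) (hB : 0 < B) {u : EuclideanSpace ℝ (Fin d)}
    (hu : ‖u‖ = 1) (w : EuclideanSpace ℝ (Fin d)) :
    Integrable (fun z : EuclideanSpace ℝ (Fin d) => ⟪w, z⟫ ^ 2)
      ((sphereUniform d B)[|{y | 0 < ⟪y, u⟫}]) := by
  haveI := cond_isProb hd hB hu
  refine ⟨((continuous_const.inner continuous_id).pow 2).aestronglyMeasurable, ?_⟩
  apply HasFiniteIntegral.of_bounded (C := (‖w‖ * B) ^ 2)
  filter_upwards [cond_ae_norm hd hB hu] with z hz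
  rw [Real.norm_eq_abs, abs_pow]
  have h : |⟪w, z⟫| ≤ ‖w‖ * B := by
    calc |⟪w, z⟫| ≤ ‖w‖ * ‖z‖ := abs_real_inner_le_norm w z
      _ = ‖w‖ * B := by rw [hz]
  exact pow_le_pow_left₀ (abs_nonneg _) h 2

lemma integrable_inner_cond (hd : 0 < d) (hB : 0 < B) {u : EuclideanSpace ℝ (Fin d)}
    (hu : ‖u‖ = 1) (w : EuclideanSpace ℝ (Fin d)) :
    Integrable (fun z : EuclideanSpace ℝ (Fin d) => ⟪w, z⟫)
      ((sphereUniform d B)[|{y | 0 < ⟪y, u⟫}]) := by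
  haveI := cond_isProb hd hB hu
  refine ⟨(continuous_const.inner continuous_id).aestronglyMeasurable, ?_⟩
  apply HasFiniteIntegral.of_bounded (C := ‖w‖ * B)
  filter_upwards [cond_ae_norm hd hB hu] with z hz
  rw [Real.norm_eq_abs]
  calc |⟪w, z⟫| ≤ ‖w‖ * ‖z‖ := abs_real_inner_le_norm w z
    _ = ‖w‖ * B := by rw [hz]

lemma cond_sq_moment_le (hd : 0 < d) (hB : 0 < B) {l u : EuclideanSpace ℝ (Fin d)}
    (hl : ‖l‖ = 1) (hu : ‖u‖ = 1) :
    ∫ z, ⟪l, z⟫ ^ 2 ∂((sphereUniform d B)[|{y | 0 < ⟪y, u⟫}]) ≤ 2 * (B ^ 2 / d) := by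
  have h1 : ∫ z, ⟪l, z⟫ ^ 2 ∂((sphereUniform d B)[|{y | 0 < ⟪y, u⟫}])
      ≤ ∫ z, ⟪l, z⟫ ^ 2 ∂((2 : ℝ≥0∞) • sphereUniform d B) := by
    apply integral_mono_measure (cond_le_smul hd hB hu)
    · filter_upwards with z using sq_nonneg _
    · exact (integrable_inner_sq hd hB l).smul_measure (by norm_num)
  rw [integral_smul_measure, inner_sq_moment hd hB hl] at h1
  simpa using h1

lemma cond_mean_bound (hd : 0 < d) (hB : 0 < B) {l u : EuclideanSpace ℝ (Fin d)}
    (hl : ‖l‖ = 1) (hu : ‖u‖ = 1) :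
    |∫ z, ⟪l, z⟫ ∂((sphereUniform d B)[|{y | 0 < ⟪y, u⟫}])| ≤
      Real.sqrt 2 * B / Real.sqrt d := by
  haveI := cond_isProb hd hB hu
  set ν := (sphereUniform d B)[|{y | 0 < ⟪y, u⟫}] with hν
  have hd0 : (0:ℝ) < d := by exact_mod_cast hd
  have hsd : 0 < Real.sqrt d := Real.sqrt_pos.2 hd0
  have hs2 : 0 < Real.sqrt 2 := Real.sqrt_pos.2 (by norm_num)
  have hsdsq : Real.sqrt d ^ 2 = d := Real.sq_sqrt hd0.le
  have hs2sq : Real.sqrt 2 ^ 2 = 2 := Real.sq_sqrt (by norm_num)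
  set a : ℝ := Real.sqrt d / (Real.sqrt 2 * B) with hadef
  have ha : 0 < a := by positivity
  have hpt : ∀ z : EuclideanSpace ℝ (Fin d),
      |⟪l, z⟫| ≤ (a * ⟪l, z⟫ ^ 2 + a⁻¹) / 2 := by
    intro z
    have h1 : (0:ℝ) ≤ (a * |⟪l, z⟫| - 1) ^ 2 := sq_nonneg _
    have h2 : a * a⁻¹ = 1 := mul_inv_cancel₀ ha.ne'
    have h3 : |⟪l, z⟫| ^ 2 = ⟪l, z⟫ ^ 2 := sq_abs _
    have key : 2 * a * |⟪l, z⟫| ≤ a ^ 2 * ⟪l, z⟫ ^ 2 + 1 := by nlinarith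
    nlinarith [key, h2, ha]
  calc |∫ z, ⟪l, z⟫ ∂ν| ≤ ∫ z, |⟪l, z⟫| ∂ν := by
        simpa [Real.norm_eq_abs] using
          norm_integral_le_integral_norm (μ := ν) (fun z : EuclideanSpace ℝ (Fin d) => ⟪l, z⟫)
    _ ≤ ∫ z, (a * ⟪l, z⟫ ^ 2 + a⁻¹) / 2 ∂ν := by
        apply integral_mono (integrable_inner_cond hd hB hu l).abs
        · exact (((integrable_inner_sq_cond hd hB hu l).const_mul a).add
            (integrable_const _)).div_const 2
        · intro z; exact hpt z
    _ = ((a * ∫ z, ⟪l, z⟫ ^ 2 ∂ν) + a⁻¹) / 2 := by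
        rw [integral_div, integral_add ((integrable_inner_sq_cond hd hB hu l).const_mul a)
          (integrable_const _), integral_const_mul, integral_const]
        rw [show ν.real Set.univ = 1 by simp]
        simp only [smul_eq_mul, one_mul, hν]
    _ ≤ ((a * (2 * (B ^ 2 / d))) + a⁻¹) / 2 := by
        have h0 := cond_sq_moment_le hd hB hl hu
        rw [← hν] at h0
        have h := mul_le_mul_of_nonneg_left h0 ha.le
        linarith
    _ = Real.sqrt 2 * B / Real.sqrt d := by
        have hsd2 : Real.sqrt (d:ℝ) * Real.sqrt (d:ℝ) = (d:ℝ) := Real.mul_self_sqrt hd0.le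
        have hs22 : Real.sqrt 2 * Real.sqrt 2 = 2 := Real.mul_self_sqrt (by norm_num)
        rw [hadef, inv_div]
        field_simp
        linear_combination (-(d:ℝ)) * hs2sq + 2 * hsdsq

theorem stmt10 :
    ∃ c : ℝ, 0 < c ∧
      ∀ (d : ℕ), 2 ≤ d → ∀ B : ℝ, 0 < B →
      ∀ l u : EuclideanSpace ℝ (Fin d), ‖l‖ = 1 → ‖u‖ = 1 →
      ∀ t : ℝ, 0 ≤ t →
        (sphereUniform d B)[|{y | 0 < ⟪y, u⟫}]
            {y | t ≤ |⟪l, y⟫ - ∫ z, ⟪l, z⟫ ∂((sphereUniform d B)[|{y | 0 < ⟪y, u⟫}])|}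
          ≤ ENNReal.ofReal (4 * Real.exp (-(c * d * t ^ 2 / B ^ 2))) := by
  refine ⟨1/200, by norm_num, fun d hd2 B hB l u hl hu t ht => ?_⟩
  have hd : 0 < d := lt_of_lt_of_le (by norm_num) hd2
  have hd0 : (0:ℝ) < d := by exact_mod_cast hd
  haveI := cond_isProb hd hB hu
  set ν := (sphereUniform d B)[|{y | 0 < ⟪y, u⟫}] with hν
  set m := ∫ z, ⟪l, z⟫ ∂ν with hm
  set a : ℝ := Real.sqrt 2 * B / Real.sqrt d with hadef
  have hsd : 0 < Real.sqrt d := Real.sqrt_pos.2 hd0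
  have hs2 : 0 < Real.sqrt 2 := Real.sqrt_pos.2 (by norm_num)
  have ha : 0 < a := by positivity
  have hma : |m| ≤ a := cond_mean_bound hd hB hl hu
  have hasq : a ^ 2 = 2 * B ^ 2 / d := by
    rw [hadef, div_pow, mul_pow, Real.sq_sqrt (by norm_num : (0:ℝ) ≤ 2),
      Real.sq_sqrt hd0.le]
  by_cases hcase : t ≤ 2 * a
  · -- trivial regime
    have hx : (1/200 : ℝ) * d * t ^ 2 / B ^ 2 ≤ 1/25 := by
      have ht2 : t ^ 2 ≤ 4 * a ^ 2 := by nlinarith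
      rw [hasq] at ht2
      rw [div_le_iff₀ (by positivity)]
      have : (d:ℝ) * t ^ 2 ≤ 8 * B ^ 2 := by
        have := mul_le_mul_of_nonneg_left ht2 hd0.le
        field_simp at this
        nlinarith
      nlinarith
    have h1 : (1:ℝ) ≤ 4 * Real.exp (-(1/200 * d * t ^ 2 / B ^ 2)) := by
      have := Real.add_one_le_exp (-(1/200 * (d:ℝ) * t ^ 2 / B ^ 2))
      nlinarith
    calc ν {y | t ≤ |⟪l, y⟫ - m|} ≤ 1 := prob_le_one
      _ ≤ ENNReal.ofReal (4 * Real.exp (-(1/200 * d * t ^ 2 / B ^ 2))) := by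
          rw [← ENNReal.ofReal_one]
          exact ENNReal.ofReal_le_ofReal h1
  · push_neg at hcase
    have ht0 : 0 < t := lt_trans (by positivity) hcase
    have hsub : {y : EuclideanSpace ℝ (Fin d) | t ≤ |⟪l, y⟫ - m|} ⊆
        {y | t/2 ≤ |⟪l, y⟫|} := by
      intro y hy
      simp only [Set.mem_setOf_eq] at hy ⊢
      have h1 : |⟪l, y⟫ - m| ≤ |⟪l, y⟫| + |m| := by
        have h2 := abs_add_le (⟪l, y⟫ : ℝ) (-m)
        simpa [sub_eq_add_neg] using h2
      linarith
    have ht2 : 0 < t/2 := by linarith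
    calc ν {y | t ≤ |⟪l, y⟫ - m|} ≤ ν {y | t/2 ≤ |⟪l, y⟫|} := measure_mono hsub
      _ ≤ 2 * sphereUniform d B {y | t/2 ≤ |⟪l, y⟫|} := cond_le hd hB hu _
      _ ≤ 2 * ENNReal.ofReal (2 * Real.exp (-((d : ℝ) * (t/2) ^ 2 / (4 * B ^ 2)))) :=
          mul_le_mul_right (sphereUniform_twoTail hd hB hl ht2) 2
      _ = ENNReal.ofReal (4 * Real.exp (-((d : ℝ) * (t/2) ^ 2 / (4 * B ^ 2)))) := by
          rw [← ENNReal.ofReal_ofNat 2, ← ENNReal.ofReal_mul (by norm_num)]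
          norm_num
          ring_nf
      _ ≤ ENNReal.ofReal (4 * Real.exp (-(1/200 * d * t ^ 2 / B ^ 2))) := by
          apply ENNReal.ofReal_le_ofReal
          have : (1/200 : ℝ) * d * t ^ 2 / B ^ 2 ≤ (d : ℝ) * (t/2) ^ 2 / (4 * B ^ 2) := by
            rw [div_le_div_iff₀ (by positivity) (by positivity)]
            nlinarith [mul_nonneg (mul_nonneg hd0.le (sq_nonneg t)) (sq_nonneg B)]
          have hexp := Real.exp_le_exp.2 (neg_le_neg this)
          nlinarith [Real.exp_nonneg (-(1/200 * (d:ℝ) * t ^ 2 / B ^ 2))]
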